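/- Let X be a path-connected ANR, r ≥ 2, let A ⊆ X^r be closed, and let Φ : A × [0,1] → X^r be a homotopy with Φ(a,0) = a for all a ∈ A (a deformation of A). If Φ_1(A) is closed, where Φ_1 = Φ(·,1), then TC_{r,X}(Φ_1(A)) ≥ TC_{r,X}(A). -/
import Mathlib


open unitInterval

/-- The `r` equidistant time points `k/(r-1)` in the unit interval. -/
noncomputable def evalPt (r : ℕ) (hr : 2 ≤ r) (k : Fin r) : unitInterval :=
  ⟨((k : ℕ) : ℝ) / ((r : ℝ) - 1), by
    have h2 : (2 : ℝ) ≤ (r : ℝ) := by exact_mod_cast hr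
    have hk : ((k : ℕ) : ℝ) + 1 ≤ (r : ℝ) := by exact_mod_cast k.isLt
    have hpos : (0 : ℝ) < (r : ℝ) - 1 := by linarith
    refine ⟨div_nonneg (by positivity) hpos.le, ?_⟩
    rw [div_le_one hpos]; linarith⟩

/-- The path fibration `p_r : PX → X^r`, evaluation at `r` equidistant points. -/
noncomputable def pathEval {X : Type*} [TopologicalSpace X] (r : ℕ) (hr : 2 ≤ r)
    (γ : C(unitInterval, X)) : Fin r → X := fun k => γ (evalPt r hr k)

/-- `A ⊆ X^r` admits a continuous sequential motion planner, i.e. a continuous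
section of `p_r` over `A`. -/
def HasMotionPlanner {X : Type*} [TopologicalSpace X] (r : ℕ) (hr : 2 ≤ r)
    (A : Set (Fin r → X)) : Prop :=
  ∃ s : A → C(unitInterval, X), Continuous s ∧
    ∀ a : A, pathEval r hr (s a) = (a : Fin r → X)

/-- The `r`-th sequential subspace complexity `TC_{r,X}(A)`: the minimal number `n`
of open subsets of `X^r` covering `A`, each admitting a continuous sequential
motion planner; `∞` if there is no such `n`. -/
noncomputable def seqTC {X : Type*} [TopologicalSpace X] (r : ℕ) (hr : 2 ≤ r)
    (A : Set (Fin r → X)) : ℕ∞ :=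
  sInf ((fun n : ℕ => (n : ℕ∞)) '' {n : ℕ | ∃ U : Fin n → Set (Fin r → X),
    (∀ i, IsOpen (U i)) ∧ A ⊆ (⋃ i, U i) ∧ ∀ i, HasMotionPlanner r hr (U i)})

universe u

/-- A metrizable space `Y` is an absolute neighborhood retract (ANR) if every
continuous map from a closed subset of a metrizable space into `Y` extends
continuously to an open neighborhood. -/
def IsANR (Y : Type u) [TopologicalSpace Y] : Prop :=
  TopologicalSpace.MetrizableSpace Y ∧
  ∀ (T : Type u) (_ : TopologicalSpace T), TopologicalSpace.MetrizableSpace T →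
    ∀ (A : Set T), IsClosed A → ∀ f : C(A, Y),
      ∃ (U : Set T) (_ : IsOpen U) (hAU : A ⊆ U) (g : C(U, Y)),
        ∀ a : A, g (Set.inclusion hAU a) = f a

set_option maxHeartbeats 1000000 in
/-- clamp to the unit interval -/
noncomputable def pr (x : ℝ) : unitInterval := Set.projIcc (0:ℝ) 1 zero_le_one x

lemma continuous_pr : Continuous pr := @continuous_projIcc ℝ _ 0 1 zero_le_one _ _

lemma pr_of_mem {x : ℝ} (h : x ∈ Set.Icc (0:ℝ) 1) : (pr x : ℝ) = x := by
  rw [pr, Set.projIcc_of_mem _ h]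

lemma pr_zero : pr 0 = 0 := by ext; rw [pr_of_mem (by norm_num)]; norm_num

lemma pr_one : pr 1 = 1 := by ext; rw [pr_of_mem (by norm_num)]; norm_num

section Gadget

variable {X Z : Type*} [TopologicalSpace X] [TopologicalSpace Z]

/-- real cast of `r - 1` as an abbreviation -/
noncomputable def Mr (r : ℕ) : ℝ := ((r - 1 : ℕ) : ℝ)

lemma Mr_eq {r : ℕ} (hr : 2 ≤ r) : Mr r = (r : ℝ) - 1 := by
  rw [Mr, Nat.cast_sub (by omega)]; norm_num

lemma Mr_pos {r : ℕ} (hr : 2 ≤ r) : 0 < Mr r := by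
  rw [Mr_eq hr]
  have : (2 : ℝ) ≤ (r : ℝ) := by exact_mod_cast hr
  linarith

/-- the index of the subinterval containing `t` -/
noncomputable def kIdx (r : ℕ) (t : unitInterval) : ℕ :=
  min (⌊Mr r * (t : ℝ)⌋₊) (r - 1 - 1)

lemma kIdx_le (r : ℕ) (t : unitInterval) : kIdx r t ≤ r - 1 - 1 := min_le_right _ _

/-- local coordinate within the subinterval -/
noncomputable def uPar (r : ℕ) (t : unitInterval) : ℝ := Mr r * (t : ℝ) - kIdx r t

lemma kIdx_eq {r : ℕ} (t : unitInterval) (k : ℕ) (hk : k + 1 ≤ r - 1)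
    (h1 : (k : ℝ) ≤ Mr r * (t : ℝ)) (h2 : Mr r * (t : ℝ) < k + 1) : kIdx r t = k := by
  have h0 : (0 : ℝ) ≤ Mr r * (t : ℝ) := le_trans (by positivity) h1
  have hf : ⌊Mr r * (t : ℝ)⌋₊ = k := (Nat.floor_eq_iff h0).2 ⟨h1, h2⟩
  rw [kIdx, hf]; omega

lemma kIdx_bounds {r : ℕ} (hr : 2 ≤ r) (t : unitInterval) :
    (kIdx r t : ℝ) ≤ Mr r * (t : ℝ) ∧ Mr r * (t : ℝ) ≤ kIdx r t + 1 := by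
  have h0 : (0 : ℝ) ≤ Mr r * (t : ℝ) := mul_nonneg (Mr_pos hr).le t.2.1
  constructor
  · calc (kIdx r t : ℝ) ≤ (⌊Mr r * (t : ℝ)⌋₊ : ℝ) := by exact_mod_cast min_le_left _ _
      _ ≤ _ := Nat.floor_le h0
  · rcases le_or_gt (⌊Mr r * (t : ℝ)⌋₊) (r - 1 - 1) with h | h
    · have : kIdx r t = ⌊Mr r * (t : ℝ)⌋₊ := by rw [kIdx]; omega
      rw [this]
      exact (Nat.lt_floor_add_one _).le
    · have hk : kIdx r t = r - 1 - 1 := by rw [kIdx]; omega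
      have : Mr r * (t : ℝ) ≤ Mr r := by
        nlinarith [t.2.2, Mr_pos hr, t.2.1]
      rw [hk]
      have hcast : ((r - 1 - 1 : ℕ) : ℝ) + 1 = Mr r := by
        rw [Mr, Nat.cast_sub (by omega)]; norm_num
      linarith

/-- The concatenated family of paths. -/
noncomputable def gF (r : ℕ) (hr : 2 ≤ r)
    (G : Z × unitInterval → X) (D : Fin r → Z × unitInterval → X)
    (zt : Z × unitInterval) : X :=
  if uPar r zt.2 ≤ 1/3 then
    D ⟨kIdx r zt.2, by have := kIdx_le r zt.2; omega⟩ (zt.1, pr (3 * uPar r zt.2))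
  else if uPar r zt.2 ≤ 2/3 then
    G (zt.1, pr ((3 * (Mr r) * (zt.2 : ℝ) - 2 * (kIdx r zt.2 : ℝ) - 1) / Mr r))
  else
    D ⟨kIdx r zt.2 + 1, by have := kIdx_le r zt.2; omega⟩
      (zt.1, pr (3 * ((kIdx r zt.2 : ℝ) + 1) - 3 * (Mr r) * (zt.2 : ℝ)))

lemma gF_eval (r : ℕ) (hr : 2 ≤ r)
    (G : Z × unitInterval → X) (D : Fin r → Z × unitInterval → X)
    (z : Z) (k : Fin r) : gF r hr G D (z, evalPt r hr k) = D k (z, 0) := by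
  set t : unitInterval := evalPt r hr k with ht
  have hMt : Mr r * (t : ℝ) = (k : ℕ) := by
    rw [ht, evalPt, Mr_eq hr]
    have hpos : (0 : ℝ) < (r : ℝ) - 1 := by
      have : (2 : ℝ) ≤ (r : ℝ) := by exact_mod_cast hr
      linarith
    field_simp
  have hkr : (k : ℕ) ≤ r - 1 := by omega
  rcases lt_or_eq_of_le hkr with hlt | heq
  · -- k < r - 1 : first branch
    have hkidx : kIdx r t = (k : ℕ) := by
      apply kIdx_eq t _ (by omega) (by rw [hMt]) (by rw [hMt]; norm_num)
    have hu : uPar r t = 0 := by rw [uPar, hkidx, hMt]; ring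
    rw [gF]
    simp only [hu, hkidx]
    rw [if_pos (by norm_num)]
    have h3 : pr (3 * (0:ℝ)) = 0 := by rw [mul_zero, pr_zero]
    rw [h3]
  · -- k = r - 1 : last branch
    have hfl : ⌊Mr r * (t : ℝ)⌋₊ = (k : ℕ) := by rw [hMt, Nat.floor_natCast]
    have hkidx : kIdx r t = r - 1 - 1 := by rw [kIdx, hfl]; omega
    have hcast : ((r - 1 - 1 : ℕ) : ℝ) = (k : ℕ) - 1 := by
      rw [Nat.cast_sub (by omega : 1 ≤ r - 1), ← heq]; norm_num
    have hu : uPar r t = 1 := by rw [uPar, hkidx, hMt, hcast]; ring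
    rw [gF]
    simp only [hu, hkidx]
    rw [if_neg (by norm_num), if_neg (by norm_num)]
    have harg : 3 * (((r - 1 - 1 : ℕ) : ℝ) + 1) - 3 * Mr r * (t : ℝ) = 0 := by
      rw [hcast, mul_assoc, hMt]; ring
    rw [harg, pr_zero]
    congr 1
    exact Fin.ext (by simp; omega)


lemma gF_cont (r : ℕ) (hr : 2 ≤ r)
    (G : Z × unitInterval → X) (hG : Continuous G)
    (D : Fin r → Z × unitInterval → X) (hD : ∀ k, Continuous (D k))
    (hend : ∀ (k : Fin r) (z : Z), D k (z, 1) = G (z, evalPt r hr k)) :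
    Continuous (gF r hr G D) := by
  have hM := Mr_pos hr
  have hMr := Mr_eq hr
  set S : Fin (r-1) × Fin 3 → Set (Z × unitInterval) := fun p =>
    {zt | ((3 * (p.1 : ℕ) + (p.2 : ℕ) : ℕ) : ℝ) ≤ 3 * Mr r * (zt.2 : ℝ) ∧
          3 * Mr r * (zt.2 : ℝ) ≤ ((3 * (p.1 : ℕ) + (p.2 : ℕ) : ℕ) : ℝ) + 1} with hS
  apply LocallyFinite.continuous (f := S) (locallyFinite_of_finite S)
  · -- cover
    apply Set.eq_univ_of_forall
    intro zt
    have hb := kIdx_bounds hr zt.2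
    have hkil := kIdx_le r zt.2
    have hkin : kIdx r zt.2 < r - 1 := by omega
    refine Set.mem_iUnion.2 ?_
    have hu : uPar r zt.2 = Mr r * (zt.2 : ℝ) - kIdx r zt.2 := rfl
    rcases le_or_gt (uPar r zt.2) (1/3) with h | h
    · refine ⟨(⟨kIdx r zt.2, hkin⟩, ⟨0, by norm_num⟩), ?_, ?_⟩ <;>
        · simp only [Fin.val_mk]; push_cast; linarith
    rcases le_or_gt (uPar r zt.2) (2/3) with h2 | h2
    · refine ⟨(⟨kIdx r zt.2, hkin⟩, ⟨1, by norm_num⟩), ?_, ?_⟩ <;>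
        · simp only [Fin.val_mk]; push_cast; linarith
    · have hu1 : uPar r zt.2 ≤ 1 := by rw [hu]; linarith [hb.2]
      refine ⟨(⟨kIdx r zt.2, hkin⟩, ⟨2, by norm_num⟩), ?_, ?_⟩ <;>
        · simp only [Fin.val_mk]; push_cast; linarith
  · -- closed
    intro p
    have : S p = (fun zt : Z × unitInterval => 3 * Mr r * (zt.2 : ℝ)) ⁻¹'
        Set.Icc (((3 * (p.1 : ℕ) + (p.2 : ℕ) : ℕ) : ℝ)) (((3 * (p.1 : ℕ) + (p.2 : ℕ) : ℕ) : ℝ) + 1) := by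
      ext zt; simp [hS, Set.mem_Icc]
    rw [this]
    exact isClosed_Icc.preimage (by fun_prop)
  · -- continuity on pieces
    rintro ⟨k, j⟩
    have hk1 : (k : ℕ) + 1 ≤ r - 1 := k.isLt
    have hkr : ((k : ℕ) : ℝ) + 1 ≤ Mr r := by
      rw [Mr]; exact_mod_cast hk1
    set K0 : Fin r := ⟨(k : ℕ), by omega⟩ with hK0
    set K1 : Fin r := ⟨(k : ℕ) + 1, by omega⟩ with hK1
    fin_cases j
    · -- j = 0
      refine ContinuousOn.congr (f := fun zt : Z × unitInterval =>
          D K0 (zt.1, pr (3 * (Mr r * (zt.2 : ℝ) - (k : ℕ)))))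
        (Continuous.continuousOn ((hD K0).comp
          (continuous_fst.prodMk (continuous_pr.comp (by fun_prop))))) ?_
      rintro ⟨z, t⟩ hzt
      simp only [hS, Set.mem_setOf_eq] at hzt
      obtain ⟨h1, h2⟩ := hzt
      push_cast at h1 h2
      have hkidx : kIdx r t = (k : ℕ) := kIdx_eq t _ hk1 (by linarith) (by linarith)
      have hu : uPar r t = Mr r * (t : ℝ) - kIdx r t := rfl
      show gF r hr G D (z, t) = _
      rw [gF]
      simp only [hu, hkidx]
      rw [if_pos (by linarith)]
    · -- j = 1
      refine ContinuousOn.congr (f := fun zt : Z × unitInterval =>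
          G (zt.1, pr ((3 * Mr r * (zt.2 : ℝ) - 2 * (k : ℕ) - 1) / Mr r)))
        (Continuous.continuousOn (hG.comp
          (continuous_fst.prodMk (continuous_pr.comp (by fun_prop))))) ?_
      rintro ⟨z, t⟩ hzt
      simp only [hS, Set.mem_setOf_eq] at hzt
      obtain ⟨h1, h2⟩ := hzt
      push_cast at h1 h2
      have hkidx : kIdx r t = (k : ℕ) := kIdx_eq t _ hk1 (by linarith) (by linarith)
      have hu : uPar r t = Mr r * (t : ℝ) - kIdx r t := rfl
      show gF r hr G D (z, t) = _
      rcases le_or_gt (uPar r t) (1/3) with hc | hc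
      · -- left endpoint : u = 1/3
        rw [hu, hkidx] at hc
        have hMt : Mr r * (t : ℝ) = (k : ℕ) + 1/3 := by linarith
        rw [gF]
        simp only [hu, hkidx]
        rw [if_pos (by linarith)]
        have h3 : 3 * (Mr r * (t : ℝ) - ((k : ℕ) : ℝ)) = 1 := by rw [hMt]; ring
        rw [h3, pr_one]
        rw [show (⟨(k : ℕ), by omega⟩ : Fin r) = K0 from rfl, hend K0 z]
        have harg : (3 * Mr r * (t : ℝ) - 2 * ((k : ℕ) : ℝ) - 1) / Mr r = (k : ℕ) / Mr r := by
          rw [mul_assoc, hMt]; ring_nf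
        have hev : evalPt r hr K0 = pr (((k : ℕ) : ℝ) / Mr r) := by
          apply Subtype.ext
          rw [pr_of_mem ⟨by positivity, by rw [div_le_one hM]; linarith⟩, hMr]
          rfl
        rw [harg, hev]
      · rw [hu, hkidx] at hc
        rw [gF]
        simp only [hu, hkidx]
        rw [if_neg (by linarith), if_pos (by linarith)]
    · -- j = 2
      refine ContinuousOn.congr (f := fun zt : Z × unitInterval =>
          D K1 (zt.1, pr (3 * (((k : ℕ) : ℝ) + 1) - 3 * Mr r * (zt.2 : ℝ))))
        (Continuous.continuousOn ((hD K1).comp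
          (continuous_fst.prodMk (continuous_pr.comp (by fun_prop))))) ?_
      rintro ⟨z, t⟩ hzt
      simp only [hS, Set.mem_setOf_eq] at hzt
      obtain ⟨h1, h2⟩ := hzt
      push_cast at h1 h2
      show gF r hr G D (z, t) = _
      rcases lt_or_eq_of_le (show Mr r * (t : ℝ) ≤ (k : ℕ) + 1 by linarith) with hlt | heqq
      · have hkidx : kIdx r t = (k : ℕ) := kIdx_eq t _ hk1 (by linarith) (by linarith)
        have hu : uPar r t = Mr r * (t : ℝ) - kIdx r t := rfl
        rcases le_or_gt (uPar r t) (2/3) with hc | hc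
        · -- u = 2/3 exactly
          rw [hu, hkidx] at hc
          have hMt : Mr r * (t : ℝ) = (k : ℕ) + 2/3 := by linarith
          rw [gF]
          simp only [hu, hkidx]
          rw [if_neg (by linarith), if_pos (by linarith)]
          have harg : (3 * Mr r * (t : ℝ) - 2 * ((k : ℕ) : ℝ) - 1) / Mr r
              = (((k : ℕ) : ℝ) + 1) / Mr r := by rw [mul_assoc, hMt]; ring_nf
          have harg2 : 3 * (((k : ℕ) : ℝ) + 1) - 3 * Mr r * (t : ℝ) = 1 := by
            rw [mul_assoc, hMt]; ring
          have hev : evalPt r hr K1 = pr ((((k : ℕ) : ℝ) + 1) / Mr r) := by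
            apply Subtype.ext
            rw [pr_of_mem ⟨by positivity, by rw [div_le_one hM]; linarith⟩, hMr]
            push_cast [hK1, evalPt]
            ring
          rw [harg, harg2, pr_one, hend K1 z, hev]
        · rw [hu, hkidx] at hc
          rw [gF]
          simp only [hu, hkidx]
          rw [if_neg (by linarith), if_neg (by linarith)]
      · -- right endpoint Mt = k + 1
        rcases lt_or_eq_of_le hk1 with hc2 | hc2
        · -- interior : kIdx = k + 1
          have hkidx : kIdx r t = (k : ℕ) + 1 := by
            apply kIdx_eq t _ (by omega) <;> push_cast <;> rw [← heqq] <;> linarith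
          have hu : uPar r t = Mr r * (t : ℝ) - kIdx r t := rfl
          rw [gF]
          simp only [hu, hkidx]
          rw [if_pos (by push_cast; linarith)]
          have h3 : 3 * (Mr r * (t : ℝ) - (((k : ℕ) + 1 : ℕ) : ℝ)) = 0 := by
            push_cast; rw [← heqq]; ring
          have h4 : 3 * (((k : ℕ) : ℝ) + 1) - 3 * Mr r * (t : ℝ) = 0 := by
            rw [← heqq]; ring
          rw [h3, h4, pr_zero]
        · -- t = 1, kIdx = k
          have hfl : ⌊Mr r * (t : ℝ)⌋₊ = (k : ℕ) + 1 := by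
            rw [heqq]
            rw [show ((k : ℕ) : ℝ) + 1 = (((k : ℕ) + 1 : ℕ) : ℝ) by push_cast; ring]
            exact Nat.floor_natCast _
          have hkidx : kIdx r t = (k : ℕ) := by rw [kIdx, hfl]; omega
          have hu : uPar r t = Mr r * (t : ℝ) - kIdx r t := rfl
          rw [gF]
          simp only [hu, hkidx]
          rw [if_neg (by linarith), if_neg (by linarith)]

theorem gadget (r : ℕ) (hr : 2 ≤ r)
    (G : Z × unitInterval → X) (hG : Continuous G)
    (D : Fin r → Z × unitInterval → X) (hD : ∀ k, Continuous (D k))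
    (hend : ∀ (k : Fin r) (z : Z), D k (z, 1) = G (z, evalPt r hr k)) :
    ∃ F : Z × unitInterval → X, Continuous F ∧
      ∀ (z : Z) (k : Fin r), F (z, evalPt r hr k) = D k (z, 0) :=
  ⟨gF r hr G D, gF_cont r hr G hG D hD hend, fun z k => gF_eval r hr G D z k⟩

end Gadget



section Plan

variable {X : Type*} [TopologicalSpace X]

lemma planner_of_section (r : ℕ) (hr : 2 ≤ r) (U : Set (Fin r → X))
    (F : ↥U × unitInterval → X) (hF : Continuous F)
    (hsec : ∀ (a : ↥U) (k : Fin r), F (a, evalPt r hr k) = (a : Fin r → X) k) :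
    HasMotionPlanner r hr U := by
  refine ⟨fun a => (ContinuousMap.mk F hF).curry a,
    ((ContinuousMap.mk F hF).curry).continuous, ?_⟩
  intro a
  funext k
  exact hsec a k

lemma uncurry_cont {Z : Type*} [TopologicalSpace Z] {s : Z → C(unitInterval, X)}
    (hs : Continuous s) : Continuous fun p : Z × unitInterval => s p.1 p.2 :=
  (hs.comp continuous_fst).eval continuous_snd

/-- the largest tube inside an open set of `Y × I` is open -/
lemma tube_open {Y : Type*} [TopologicalSpace Y] {U : Set (Y × unitInterval)}
    (hU : IsOpen U) : IsOpen {y : Y | ∀ t, (y, t) ∈ U} := by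
  rw [isOpen_iff_forall_mem_open]
  intro y hy
  obtain ⟨u, v, hu, hv, hyu, hIv, huv⟩ := generalized_tube_lemma isCompact_singleton
    isCompact_univ hU (by
      rintro ⟨a, b⟩ ⟨ha, -⟩
      rcases ha with rfl
      exact hy b)
  exact ⟨u, fun y' hy' t => huv ⟨hy', hIv (Set.mem_univ t)⟩, hu, hyu rfl⟩

end Plan

section ANR

variable {X : Type u} [TopologicalSpace X]

/-- An ANR admits an "equiconnecting" family of paths on a neighborhood of the diagonal. -/
lemma exists_equiconn (hX : IsANR X) :
    ∃ W : Set (X × X), IsOpen W ∧ (∀ x : X, (x, x) ∈ W) ∧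
      ∃ h : ↥W × unitInterval → X, Continuous h ∧
        (∀ w : ↥W, h (w, 0) = (w : X × X).1) ∧ (∀ w : ↥W, h (w, 1) = (w : X × X).2) := by
  classical
  obtain ⟨hmet, hext⟩ := hX
  haveI := hmet
  letI : MetricSpace X := TopologicalSpace.metrizableSpaceMetric X
  set A₀ : Set ((X × X) × unitInterval) :=
    ((Set.univ : Set (X × X)) ×ˢ ({0, 1} : Set unitInterval)) ∪
      (Set.diagonal X ×ˢ (Set.univ : Set unitInterval)) with hA₀def
  have hA₀ : IsClosed A₀ := by
    apply IsClosed.union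
    · exact isClosed_univ.prod (by
        apply Set.Finite.isClosed
        exact (Set.finite_singleton _).insert _)
    · exact isClosed_diagonal.prod isClosed_univ
  set f : ↥A₀ → X := fun q =>
    if ((q : (X × X) × unitInterval).2 : ℝ) ≤ 1/2 then (q : (X × X) × unitInterval).1.1
    else (q : (X × X) × unitInterval).1.2 with hfdef
  have hf : Continuous f := by
    apply Continuous.if_le
    · fun_prop
    · fun_prop
    · fun_prop
    · exact continuous_const
    · rintro ⟨⟨⟨x, y⟩, t⟩, hq⟩ ht
      simp only at ht ⊢
      rcases hq with ⟨-, ht01⟩ | ⟨hd, -⟩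
      · exfalso
        have h2 : t = 0 ∨ t = 1 := by simpa using ht01
        rcases h2 with h | h <;> · rw [h] at ht; norm_num at ht
      · exact hd
  obtain ⟨U, hU, hAU, g, hg⟩ := hext _ _ inferInstance A₀ hA₀ ⟨f, hf⟩
  refine ⟨{p : X × X | ∀ t, (p, t) ∈ U}, tube_open hU, fun x t => hAU (Or.inr ⟨rfl, trivial⟩), ?_⟩
  refine ⟨fun q => g ⟨(q.1.1, q.2), q.1.2 q.2⟩, ?_, ?_, ?_⟩
  · apply g.continuous.comp
    apply Continuous.subtype_mk
    exact (continuous_subtype_val.comp continuous_fst).prodMk continuous_snd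
  · intro w
    have hmem : ((w : X × X), (0 : unitInterval)) ∈ A₀ := Or.inl ⟨trivial, Or.inl rfl⟩
    have h1 := hg ⟨((w : X × X), 0), hmem⟩
    have heq : (Set.inclusion hAU ⟨((w : X × X), 0), hmem⟩)
        = (⟨((w : X × X), (0 : unitInterval)), w.2 0⟩ : ↥U) := Subtype.ext rfl
    rw [heq] at h1
    show g ⟨((w : X × X), (0 : unitInterval)), w.2 0⟩ = (w : X × X).1
    rw [h1]
    show (if (((0 : unitInterval) : ℝ)) ≤ 1/2 then (w : X × X).1 else (w : X × X).2)
        = (w : X × X).1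
    rw [if_pos (by norm_num)]
  · intro w
    have hmem : ((w : X × X), (1 : unitInterval)) ∈ A₀ := Or.inl ⟨trivial, Or.inr rfl⟩
    have h1 := hg ⟨((w : X × X), 1), hmem⟩
    have heq : (Set.inclusion hAU ⟨((w : X × X), 1), hmem⟩)
        = (⟨((w : X × X), (1 : unitInterval)), w.2 1⟩ : ↥U) := Subtype.ext rfl
    rw [heq] at h1
    show g ⟨((w : X × X), (1 : unitInterval)), w.2 1⟩ = (w : X × X).2
    rw [h1]
    show (if (((1 : unitInterval) : ℝ)) ≤ 1/2 then (w : X × X).1 else (w : X × X).2)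
        = (w : X × X).2
    rw [if_neg (by norm_num)]

end ANR

section Nbhd

variable {X : Type u} [TopologicalSpace X]

lemma planner_nbhd (hX : IsANR X) (r : ℕ) (hr : 2 ≤ r)
    {C : Set (Fin r → X)} (hC : IsClosed C)
    (sg : ↥C → C(unitInterval, X)) (hsg : Continuous sg)
    (hsec : ∀ a : ↥C, pathEval r hr (sg a) = (a : Fin r → X)) :
    ∃ O : Set (Fin r → X), IsOpen O ∧ C ⊆ O ∧ HasMotionPlanner r hr O := by
  classical
  obtain ⟨W, hWopen, hWdiag, h, hh, h0, h1⟩ := exists_equiconn hX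
  obtain ⟨hmet, hext⟩ := hX
  haveI := hmet
  letI : MetricSpace X := TopologicalSpace.metrizableSpaceMetric X
  set A' : Set ((Fin r → X) × unitInterval) := C ×ˢ Set.univ with hA'def
  have hA' : IsClosed A' := hC.prod isClosed_univ
  set f : ↥A' → X := fun q =>
    sg ⟨(q : (Fin r → X) × unitInterval).1, q.2.1⟩ (q : (Fin r → X) × unitInterval).2 with hfdef
  have hf : Continuous f := by
    have c1 : Continuous fun q : ↥A' =>
        (⟨(q : (Fin r → X) × unitInterval).1, q.2.1⟩ : ↥C) :=
      (continuous_fst.comp continuous_subtype_val).subtype_mk _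
    exact (hsg.comp c1).eval (continuous_snd.comp continuous_subtype_val)
  obtain ⟨U, hU, hAU, g, hg⟩ := hext _ _ inferInstance A' hA' ⟨f, hf⟩
  set O₁ : Set (Fin r → X) := {x | ∀ t, (x, t) ∈ U} with hO₁def
  have hO₁open : IsOpen O₁ := tube_open hU
  have hCO₁ : C ⊆ O₁ := fun x hx t => hAU ⟨hx, trivial⟩
  set G : ↥O₁ × unitInterval → X :=
    fun q => g ⟨((q.1 : Fin r → X), q.2), q.1.2 q.2⟩ with hGdef
  have hG : Continuous G := g.continuous.comp (Continuous.subtype_mk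
    ((continuous_subtype_val.comp continuous_fst).prodMk continuous_snd) _)
  have hGC : ∀ (x : ↥O₁) (hx : (x : Fin r → X) ∈ C) (t : unitInterval),
      G (x, t) = sg ⟨(x : Fin r → X), hx⟩ t := by
    intro x hx t
    have hmem : ((x : Fin r → X), t) ∈ A' := ⟨hx, trivial⟩
    have h1 := hg ⟨((x : Fin r → X), t), hmem⟩
    have heq : Set.inclusion hAU ⟨((x : Fin r → X), t), hmem⟩
        = (⟨((x : Fin r → X), t), x.2 t⟩ : ↥U) := Subtype.ext rfl
    rw [heq] at h1
    exact h1
  set Sgood : Set ↥O₁ :=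
    {x | ∀ k : Fin r, ((x : Fin r → X) k, G (x, evalPt r hr k)) ∈ W} with hSdef
  have hSopen : IsOpen Sgood := by
    rw [show Sgood = ⋂ k : Fin r, {x : ↥O₁ |
        ((x : Fin r → X) k, G (x, evalPt r hr k)) ∈ W} by ext; simp [hSdef]]
    apply isOpen_iInter_of_finite
    intro k
    apply hWopen.preimage (f := fun x : ↥O₁ => ((x : Fin r → X) k, G (x, evalPt r hr k)))
    exact ((continuous_apply k).comp continuous_subtype_val).prodMk
      (hG.comp (continuous_id.prodMk continuous_const))
  set O : Set (Fin r → X) := Subtype.val '' Sgood with hOdef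
  have hOopen : IsOpen O := hO₁open.isOpenMap_subtype_val _ hSopen
  have hOO₁ : O ⊆ O₁ := by rintro x ⟨y, hy, rfl⟩; exact y.2
  have hCO : C ⊆ O := by
    intro x hx
    refine ⟨⟨x, hCO₁ hx⟩, ?_, rfl⟩
    intro k
    show (x k, G (⟨x, hCO₁ hx⟩, evalPt r hr k)) ∈ W
    rw [hGC ⟨x, hCO₁ hx⟩ hx (evalPt r hr k)]
    rw [show sg ⟨x, hx⟩ (evalPt r hr k) = x k from congrFun (hsec ⟨x, hx⟩) k]
    exact hWdiag _
  have hyeq : ∀ (y : ↥O₁) (p : (y : Fin r → X) ∈ O₁),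
      (⟨(y : Fin r → X), p⟩ : ↥O₁) = y := fun y p => Subtype.ext rfl
  have hWmem : ∀ (q : ↥O) (k : Fin r),
      ((q : Fin r → X) k, G (⟨(q : Fin r → X), hOO₁ q.2⟩, evalPt r hr k)) ∈ W := by
    rintro ⟨x, y, hy, rfl⟩ k
    show ((y : Fin r → X) k, G (⟨(y : Fin r → X), _⟩, evalPt r hr k)) ∈ W
    rw [hyeq y _]
    exact hy k
  refine ⟨O, hOopen, hCO, ?_⟩
  set D : Fin r → ↥O × unitInterval → X := fun k q =>
    h (⟨((q.1 : Fin r → X) k, G (⟨(q.1 : Fin r → X), hOO₁ q.1.2⟩, evalPt r hr k)),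
        hWmem q.1 k⟩, q.2) with hDdef
  set G' : ↥O × unitInterval → X :=
    fun q => G (⟨(q.1 : Fin r → X), hOO₁ q.1.2⟩, q.2) with hG'def
  have hG'c : Continuous G' := hG.comp (((continuous_subtype_val.comp
    continuous_fst).subtype_mk _).prodMk continuous_snd)
  have hDc : ∀ k, Continuous (D k) := by
    intro k
    apply hh.comp
    refine (Continuous.subtype_mk ?_ _).prodMk continuous_snd
    refine (((continuous_apply k).comp (continuous_subtype_val.comp continuous_fst))).prodMk ?_
    exact hG'c.comp (continuous_fst.prodMk continuous_const)
  have hendD : ∀ (k : Fin r) (z : ↥O), D k (z, 1) = G' (z, evalPt r hr k) := by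
    intro k z
    exact h1 _
  obtain ⟨F, hF, hFeval⟩ := gadget r hr G' hG'c D hDc hendD
  apply planner_of_section r hr O F hF
  intro a k
  rw [hFeval a k]
  exact h0 _

end Nbhd


theorem stmt6 {X : Type u} [TopologicalSpace X] [PathConnectedSpace X] (hX : IsANR X)
    (r : ℕ) (hr : 2 ≤ r) (A : Set (Fin r → X)) (hA : IsClosed A)
    (Φ : ↥A × unitInterval → (Fin r → X)) (hΦ : Continuous Φ)
    (h0 : ∀ a : ↥A, Φ (a, 0) = (a : Fin r → X))
    (hclosed : IsClosed (Set.range fun a : ↥A => Φ (a, 1))) :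
    seqTC r hr A ≤ seqTC r hr (Set.range fun a : ↥A => Φ (a, 1)) := by
  classical
  apply sInf_le_sInf
  apply Set.image_mono
  rintro n ⟨V, hVopen, hBcov, hVmp⟩
  haveI := hX.1
  letI : MetricSpace X := TopologicalSpace.metrizableSpaceMetric X
  set Φ₁ : ↥A → (Fin r → X) := fun a => Φ (a, 1) with hΦ₁def
  have hΦ₁c : Continuous Φ₁ := hΦ.comp (continuous_id.prodMk continuous_const)
  have hex : ∀ i : Fin n, ∃ O : Set (Fin r → X), IsOpen O ∧
      Subtype.val ⁻¹' O = Φ₁ ⁻¹' (V i) := by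
    intro i
    have : IsOpen (Φ₁ ⁻¹' (V i)) := (hVopen i).preimage hΦ₁c
    rwa [isOpen_induced_iff] at this
  choose O hOopen hOpre using hex
  have hAcov : A ⊆ ⋃ i, O i := by
    intro x hx
    have hmem : Φ₁ ⟨x, hx⟩ ∈ Set.range (fun a : ↥A => Φ (a, 1)) := ⟨⟨x, hx⟩, rfl⟩
    obtain ⟨i, hi⟩ := Set.mem_iUnion.1 (hBcov hmem)
    have : (⟨x, hx⟩ : ↥A) ∈ Subtype.val ⁻¹' O i := by rw [hOpre i]; exact hi
    exact Set.mem_iUnion.2 ⟨i, this⟩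
  obtain ⟨Vc, hAVc, hVcclosed, hVcsub⟩ :=
    exists_subset_iUnion_closed_subset hA hOopen (fun x _ => Set.toFinite _) hAcov
  have hplan : ∀ i : Fin n, ∃ O' : Set (Fin r → X), IsOpen O' ∧ Vc i ∩ A ⊆ O' ∧
      HasMotionPlanner r hr O' := by
    intro i
    obtain ⟨s, hs, hsp⟩ := hVmp i
    set Ci : Set (Fin r → X) := Vc i ∩ A with hCidef
    have hCic : IsClosed Ci := (hVcclosed i).inter hA
    have hmemA : ∀ c : ↥Ci, (c : Fin r → X) ∈ A := fun c => c.2.2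
    set aZ : ↥Ci → ↥A := fun c => ⟨(c : Fin r → X), hmemA c⟩ with haZ
    have haZc : Continuous aZ := continuous_subtype_val.subtype_mk _
    have hmemV : ∀ c : ↥Ci, Φ₁ (aZ c) ∈ V i := by
      intro c
      have h1 : (c : Fin r → X) ∈ O i := hVcsub i c.2.1
      have h2 : aZ c ∈ Subtype.val ⁻¹' O i := h1
      rw [hOpre i] at h2
      exact h2
    set GZ : ↥Ci × unitInterval → X := fun q => s ⟨Φ₁ (aZ q.1), hmemV q.1⟩ q.2 with hGZ
    have hGZc : Continuous GZ :=
      ((hs.comp ((hΦ₁c.comp haZc).subtype_mk _)).comp continuous_fst).eval continuous_snd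
    set DZ : Fin r → ↥Ci × unitInterval → X := fun k q => Φ (aZ q.1, q.2) k with hDZ
    have hDZc : ∀ k, Continuous (DZ k) := fun k => (continuous_apply k).comp
      (hΦ.comp ((haZc.comp continuous_fst).prodMk continuous_snd))
    have hendZ : ∀ (k : Fin r) (z : ↥Ci), DZ k (z, 1) = GZ (z, evalPt r hr k) := by
      intro k z
      show Φ (aZ z, 1) k = s ⟨Φ₁ (aZ z), hmemV z⟩ (evalPt r hr k)
      have h3 := congrFun (hsp ⟨Φ₁ (aZ z), hmemV z⟩) k
      rw [show pathEval r hr (s ⟨Φ₁ (aZ z), hmemV z⟩) k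
          = s ⟨Φ₁ (aZ z), hmemV z⟩ (evalPt r hr k) from rfl] at h3
      rw [h3]
    obtain ⟨F, hFc, hFeval⟩ := gadget r hr GZ hGZc DZ hDZc hendZ
    have hsection : ∀ c : ↥Ci,
        pathEval r hr ((ContinuousMap.mk F hFc).curry c) = (c : Fin r → X) := by
      intro c
      funext k
      show F (c, evalPt r hr k) = (c : Fin r → X) k
      rw [hFeval c k]
      show Φ (aZ c, 0) k = _
      rw [h0 (aZ c)]
    exact planner_nbhd hX r hr hCic (fun c => (ContinuousMap.mk F hFc).curry c)
      ((ContinuousMap.mk F hFc).curry.continuous) hsection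
  choose O' hO'open hO'sub hO'mp using hplan
  refine ⟨O', hO'open, ?_, hO'mp⟩
  intro x hx
  obtain ⟨i, hi⟩ := Set.mem_iUnion.1 (hAVc hx)
  exact Set.mem_iUnion.2 ⟨i, hO'sub i ⟨hi, hx⟩⟩
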